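/- Let n ≥ 2, r0 > 0, 1 ≤ β ≤ 2, and C1, C2 ≥ 0. Let u ∈ C²((r0,∞)) satisfy |u''(r) + (n−1)·coth(r)·u'(r)| ≤ C1 r^{(3β−3)/2} |u(r)| + C2 r^{(β−1)/2} |u'(r)| for all r > r0. If for every τ > 0 there is a constant C_τ such that |u(r)| ≤ C_τ e^{−τ r^β} for all r > r0, then u ≡ 0 on (r0+1, ∞). -/

import Mathlib

open MeasureTheory Filter Real Set Asymptotics

open Topology

lemma aux_coth_le_two {t : ℝ} (ht : 1 ≤ t) : Real.cosh t / Real.sinh t ≤ 2 := by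
  have h1 : (1:ℝ) < Real.sinh t := lt_of_le_of_lt ht (Real.self_lt_sinh_iff.2 (by linarith))
  have h0 : (0:ℝ) < Real.sinh t := by linarith
  rw [div_le_iff₀ h0]
  have hc : Real.cosh t = Real.sinh t + Real.exp (-t) := by
    rw [Real.cosh_eq, Real.sinh_eq]; ring
  have he : Real.exp (-t) ≤ 1 := Real.exp_le_one_iff.2 (by linarith)
  nlinarith

lemma aux_coth_nonneg {t : ℝ} (ht : 1 ≤ t) : 0 ≤ Real.cosh t / Real.sinh t := by
  have h1 : (1:ℝ) < Real.sinh t := lt_of_le_of_lt ht (Real.self_lt_sinh_iff.2 (by linarith))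
  positivity

set_option maxHeartbeats 1600000 in
lemma aux_stepA (n : ℕ) (hn : 2 ≤ n) (r0 β C1 C2 : ℝ) (hβ1 : 1 ≤ β)
    (hC1 : 0 ≤ C1) (hC2 : 0 ≤ C2) (u : ℝ → ℝ)
    (hd1 : ∀ s ∈ Set.Ioi r0, HasDerivAt u (deriv u s) s)
    (hd2 : ∀ s ∈ Set.Ioi r0, HasDerivAt (deriv u) (deriv (deriv u) s) s)
    (hineq : ∀ s ∈ Set.Ioi r0,
      |deriv (deriv u) s + ((n : ℝ) - 1) * (Real.cosh s / Real.sinh s) * deriv u s| ≤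
        C1 * s ^ ((3 * β - 3) / 2) * |u s| + C2 * s ^ ((β - 1) / 2) * |deriv u s|)
    (r ξ : ℝ) (hr1 : 1 < r) (hr0 : r0 < r) (hrξ : r < ξ) :
    |u r| ≤ (ξ ^ ((3*β-3)/4) * |u ξ| + |deriv u ξ|) *
      Real.exp (((1 + C1 + C2 + 2*n) * ξ ^ ((3*β-3)/4)) * (ξ - r)) := by
  obtain ⟨e3, he3⟩ : ∃ x : ℝ, x = (3*β-3)/4 := ⟨_, rfl⟩
  rw [← he3]
  have he3nn : 0 ≤ e3 := by rw [he3]; linarith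
  have hξ1 : (1:ℝ) < ξ := lt_trans hr1 hrξ
  have hξ0 : (0:ℝ) < ξ := by linarith
  obtain ⟨Λ, hΛ⟩ : ∃ x : ℝ, x = ξ ^ e3 := ⟨_, rfl⟩
  rw [← hΛ]
  have hΛ1 : 1 ≤ Λ := hΛ ▸ Real.one_le_rpow hξ1.le he3nn
  have hΛ0 : 0 < Λ := by linarith
  obtain ⟨c, hc⟩ : ∃ x : ℝ, x = 1 + C1 + C2 + 2*(n:ℝ) := ⟨_, rfl⟩
  rw [← hc]
  have hn2 : (2:ℝ) ≤ (n:ℝ) := by exact_mod_cast hn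
  have hc1 : 1 ≤ c := by rw [hc]; linarith
  obtain ⟨K, hK⟩ : ∃ x : ℝ, x = c * Λ := ⟨_, rfl⟩
  have hΛK : Λ ≤ K := by
    rw [hK]; nlinarith
  obtain ⟨ρ, hρ⟩ : ∃ x : ℝ, x = r + ξ := ⟨_, rfl⟩
  -- membership facts
  have hmem : ∀ t ∈ Icc r ξ, ρ - t ∈ Icc r ξ := by
    intro t ht
    constructor <;> [linarith [ht.2]; linarith [ht.1]]
  have hIoi : ∀ t ∈ Icc r ξ, t ∈ Set.Ioi r0 := fun t ht => lt_of_lt_of_le hr0 ht.1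
  -- the reversed vector function
  obtain ⟨g, hg⟩ : ∃ g : ℝ → ℝ × ℝ, g = fun t => (Λ * u (ρ - t), deriv u (ρ - t)) := ⟨_, rfl⟩
  obtain ⟨g', hg'⟩ : ∃ g' : ℝ → ℝ × ℝ, g' = fun t =>
    (Λ * (deriv u (ρ - t) * (-1)), deriv (deriv u) (ρ - t) * (-1)) := ⟨_, rfl⟩
  have hgd : ∀ t ∈ Icc r ξ, HasDerivAt g (g' t) t := by
    intro t ht
    rw [hg, hg']
    have hs := hIoi _ (hmem t ht)
    have hinner : HasDerivAt (fun x : ℝ => ρ - x) (-1) t := (hasDerivAt_id t).const_sub ρ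
    have h1 : HasDerivAt (fun x => u (ρ - x)) (deriv u (ρ - t) * (-1)) t :=
      (hd1 _ hs).comp t hinner
    have h2 : HasDerivAt (fun x => deriv u (ρ - x)) (deriv (deriv u) (ρ - t) * (-1)) t :=
      (hd2 _ hs).comp t hinner
    exact (h1.const_mul Λ).prodMk h2
  have hcont : ContinuousOn g (Icc r ξ) :=
    fun t ht => (hgd t ht).continuousAt.continuousWithinAt
  have hbound : ∀ t ∈ Ico r ξ, ‖g' t‖ ≤ K * ‖g t‖ + 0 := by
    intro t ht
    have htcc : t ∈ Icc r ξ := ⟨ht.1, ht.2.le⟩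
    obtain ⟨s, hs⟩ : ∃ x : ℝ, x = ρ - t := ⟨_, rfl⟩
    have hscc : s ∈ Icc r ξ := hs ▸ hmem t htcc
    have hsIoi : s ∈ Set.Ioi r0 := hIoi _ hscc
    have hs1 : 1 ≤ s := by have := hscc.1; linarith
    have hsξ : s ≤ ξ := hscc.2
    have hgnorm : ‖g t‖ = max (Λ * |u s|) |deriv u s| := by
      rw [hg, hs]
      simp [Prod.norm_def, Real.norm_eq_abs, abs_mul, abs_of_pos hΛ0]
    have hgnn : 0 ≤ ‖g t‖ := norm_nonneg _
    have hu_le : Λ * |u s| ≤ ‖g t‖ := by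
      rw [hgnorm]; exact le_max_left _ _
    have hu'_le : |deriv u s| ≤ ‖g t‖ := by rw [hgnorm]; exact le_max_right _ _
    simp only [hg', ← hs, Prod.norm_def, Real.norm_eq_abs, add_zero]
    apply max_le
    · calc |Λ * (deriv u s * (-1))| = Λ * |deriv u s| := by
            rw [abs_mul, abs_of_pos hΛ0, abs_mul]; simp
        _ ≤ Λ * ‖g t‖ := by exact mul_le_mul_of_nonneg_left hu'_le hΛ0.le
        _ ≤ K * ‖g t‖ := mul_le_mul_of_nonneg_right hΛK hgnn
    · -- second component
      have hco1 : Real.cosh s / Real.sinh s ≤ 2 := aux_coth_le_two hs1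
      have hco0 : 0 ≤ Real.cosh s / Real.sinh s := aux_coth_nonneg hs1
      have hn1 : (0:ℝ) ≤ (n:ℝ) - 1 := by
        have : (2:ℝ) ≤ n := by exact_mod_cast hn
        linarith
      have hnb : ((n:ℝ) - 1) * (Real.cosh s / Real.sinh s) ≤ 2*n := by nlinarith
      have key := hineq s hsIoi
      -- rpow bounds
      have hr1' : s ^ ((3*β-3)/2) ≤ Λ * Λ := by
        have h1 : s ^ ((3*β-3)/2) ≤ ξ ^ ((3*β-3)/2) :=
          Real.rpow_le_rpow (by linarith) hsξ (by linarith)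
        have h2 : ξ ^ ((3*β-3)/2) = Λ * Λ := by
          rw [hΛ, ← Real.rpow_add hξ0, he3]; ring_nf
        linarith
      have hr2' : s ^ ((β-1)/2) ≤ Λ := by
        have h1 : s ^ ((β-1)/2) ≤ ξ ^ ((β-1)/2) :=
          Real.rpow_le_rpow (by linarith) hsξ (by linarith)
        have h2 : ξ ^ ((β-1)/2) ≤ ξ ^ e3 :=
          Real.rpow_le_rpow_of_exponent_le hξ1.le (by rw [he3]; linarith)
        rw [hΛ]; linarith
      have habs : |deriv (deriv u) s| ≤
          C1 * s ^ ((3*β-3)/2) * |u s| + C2 * s ^ ((β-1)/2) * |deriv u s|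
            + 2*n * |deriv u s| := by
        have h3 : |deriv (deriv u) s| ≤
            |deriv (deriv u) s + ((n : ℝ) - 1) * (Real.cosh s / Real.sinh s) * deriv u s|
            + |((n : ℝ) - 1) * (Real.cosh s / Real.sinh s) * deriv u s| := by
          have h5 := abs_add_le (deriv (deriv u) s + ((n : ℝ) - 1) * (Real.cosh s / Real.sinh s) * deriv u s) (-(((n : ℝ) - 1) * (Real.cosh s / Real.sinh s) * deriv u s))
          simp only [add_neg_cancel_right, abs_neg] at h5
          exact h5
        have h4 : |((n : ℝ) - 1) * (Real.cosh s / Real.sinh s) * deriv u s| ≤ 2*n * |deriv u s| := by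
          rw [abs_mul]
          apply mul_le_mul_of_nonneg_right _ (abs_nonneg _)
          rw [abs_of_nonneg (by positivity)]
          exact hnb
        linarith
      have hsnn : 0 ≤ s ^ ((3*β-3)/2) := Real.rpow_nonneg (by linarith) _
      have hsnn2 : 0 ≤ s ^ ((β-1)/2) := Real.rpow_nonneg (by linarith) _
      have hub : |u s| ≤ ‖g t‖ / Λ := by
        rw [le_div_iff₀ hΛ0]; nlinarith
      calc |deriv (deriv u) s * (-1)| = |deriv (deriv u) s| := by rw [abs_mul]; simp
        _ ≤ C1 * s ^ ((3*β-3)/2) * |u s| + C2 * s ^ ((β-1)/2) * |deriv u s|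
            + 2*n * |deriv u s| := habs
        _ ≤ C1 * (Λ*Λ) * (‖g t‖ / Λ) + C2 * Λ * ‖g t‖ + 2*n * (Λ * ‖g t‖) := by
            have t1 : C1 * s ^ ((3*β-3)/2) * |u s| ≤ C1 * (Λ*Λ) * (‖g t‖ / Λ) :=
              mul_le_mul (mul_le_mul_of_nonneg_left hr1' hC1) hub (abs_nonneg _)
                (mul_nonneg hC1 (mul_nonneg hΛ0.le hΛ0.le))
            have t2 : C2 * s ^ ((β-1)/2) * |deriv u s| ≤ C2 * Λ * ‖g t‖ :=
              mul_le_mul (mul_le_mul_of_nonneg_left hr2' hC2) hu'_le (abs_nonneg _)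
                (mul_nonneg hC2 hΛ0.le)
            have t3 : 2*(n:ℝ) * |deriv u s| ≤ 2*n * (Λ * ‖g t‖) :=
              mul_le_mul_of_nonneg_left
                (le_trans hu'_le (le_mul_of_one_le_left hgnn hΛ1))
                (by norm_num)
            linarith
        _ ≤ K * ‖g t‖ := by
            have hd : ‖g t‖ / Λ * Λ = ‖g t‖ := div_mul_cancel₀ _ (ne_of_gt hΛ0)
            have e1 : C1*(Λ*Λ)*(‖g t‖/Λ) = C1*Λ*‖g t‖ := by
              nth_rewrite 2 [← hd]; ring
            rw [hK, hc, e1]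
            nlinarith [mul_nonneg hΛ0.le hgnn]
  have hga : ‖g r‖ ≤ Λ * |u ξ| + |deriv u ξ| := by
    have hx : ρ - r = ξ := by rw [hρ]; ring
    rw [hg]
    simp only [hx, Prod.norm_def, Real.norm_eq_abs]
    rw [abs_mul, abs_of_pos hΛ0]
    apply max_le <;> [linarith [abs_nonneg (deriv u ξ)]; linarith [mul_nonneg hΛ0.le (abs_nonneg (u ξ)), abs_nonneg (u ξ)]]
  have hgron := norm_le_gronwallBound_of_norm_deriv_right_le hcont
    (fun x hx => (hgd x ⟨hx.1, hx.2.le⟩).hasDerivWithinAt) hga hbound ξ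
    ⟨hrξ.le, le_refl ξ⟩
  rw [gronwallBound_ε0] at hgron
  have hfin : Λ * |u r| ≤ ‖g ξ‖ := by
    have hx : ρ - ξ = r := by rw [hρ]; ring
    rw [hg]
    simp only [hx, Prod.norm_def, Real.norm_eq_abs]
    rw [abs_mul, abs_of_pos hΛ0]
    exact le_max_left _ _
  have hur : |u r| ≤ Λ * |u r| := by nlinarith [abs_nonneg (u r)]
  rw [← hK]
  calc |u r| ≤ Λ * |u r| := hur
    _ ≤ ‖g ξ‖ := hfin
    _ ≤ (Λ * |u ξ| + |deriv u ξ|) * Real.exp (K * (ξ - r)) := hgron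

set_option maxHeartbeats 1600000 in
/-- The one-dimensional (radial) case of Corollary 6.2 a) of the paper on hyperbolic
conical ends: the radial hyperbolic Laplacian is L u = u'' + (n−1)·coth(r)·u'. -/
theorem stmt_10
    (n : ℕ) (hn : 2 ≤ n) (r0 : ℝ) (hr0 : 0 < r0)
    (β : ℝ) (hβ1 : 1 ≤ β) (hβ2 : β ≤ 2) (C1 C2 : ℝ) (hC1 : 0 ≤ C1) (hC2 : 0 ≤ C2)
    (u : ℝ → ℝ) (hu : ContDiffOn ℝ 2 u (Ioi r0))
    (hineq : ∀ r ∈ Ioi r0,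
      |deriv (deriv u) r + ((n : ℝ) - 1) * (Real.cosh r / Real.sinh r) * deriv u r| ≤
        C1 * r ^ ((3 * β - 3) / 2) * |u r| + C2 * r ^ ((β - 1) / 2) * |deriv u r|)
    (hdecay : ∀ τ > (0 : ℝ), ∃ Cτ : ℝ, ∀ r ∈ Ioi r0,
      |u r| ≤ Cτ * Real.exp (-τ * r ^ β)) :
    ∀ r, r0 + 1 < r → u r = 0 := by
  have hopen : IsOpen (Ioi r0) := isOpen_Ioi
  have hdiff : DifferentiableOn ℝ u (Ioi r0) := hu.differentiableOn (by norm_num)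
  have hd1 : ∀ s ∈ Ioi r0, HasDerivAt u (deriv u s) s := fun s hs =>
    (hdiff.differentiableAt (hopen.mem_nhds hs)).hasDerivAt
  have hu' : ContDiffOn ℝ 1 (deriv u) (Ioi r0) := hu.deriv_of_isOpen hopen (by norm_num)
  have hdiff' : DifferentiableOn ℝ (deriv u) (Ioi r0) := hu'.differentiableOn (by norm_num)
  have hd2 : ∀ s ∈ Ioi r0, HasDerivAt (deriv u) (deriv (deriv u) s) s := fun s hs =>
    (hdiff'.differentiableAt (hopen.mem_nhds hs)).hasDerivAt
  intro r hr
  have hr1 : 1 < r := by linarith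
  have hrIoi : r ∈ Ioi r0 := by simp only [mem_Ioi]; linarith
  have hn2 : (2:ℝ) ≤ (n:ℝ) := by exact_mod_cast hn
  obtain ⟨c, hc⟩ : ∃ x : ℝ, x = 1 + C1 + C2 + 2*(n:ℝ) := ⟨_, rfl⟩
  have hc1 : 1 ≤ c := by rw [hc]; linarith
  obtain ⟨Cτ, hCτ⟩ := hdecay (4*c+1) (by linarith)
  have hCτ0 : 0 ≤ Cτ := by
    have h := hCτ r hrIoi
    have h2 := abs_nonneg (u r)
    have h3 := Real.exp_pos (-(4*c+1) * r ^ β)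
    nlinarith
  -- key estimate along a sequence
  have key : ∀ k : ℕ, r ≤ k → |u r| ≤ (((k:ℝ)+1)^2 + 2) * Cτ * Real.exp (-(k:ℝ)) := by
    intro k hk
    have hk1 : (1:ℝ) ≤ k := by linarith
    have hk0 : (0:ℝ) ≤ k := by linarith
    have hkk1 : (k:ℝ) < (k:ℝ)+1 := by linarith
    have hmem : ∀ x ∈ Icc (k:ℝ) ((k:ℝ)+1), x ∈ Ioi r0 := by
      intro x hx; simp only [mem_Ioi]; have := hx.1; simp only [mem_Ioi] at hrIoi; linarith
    have hcont : ContinuousOn u (Icc (k:ℝ) ((k:ℝ)+1)) := fun x hx =>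
      (hd1 x (hmem x hx)).continuousAt.continuousWithinAt
    have hderiv : ∀ x ∈ Ioo (k:ℝ) ((k:ℝ)+1), HasDerivAt u (deriv u x) x := fun x hx =>
      hd1 x (hmem x ⟨hx.1.le, hx.2.le⟩)
    obtain ⟨ξ, hξmem, hξeq⟩ := exists_hasDerivAt_eq_slope u (deriv u) hkk1 hcont hderiv
    have hξslope : deriv u ξ = u ((k:ℝ)+1) - u (k:ℝ) := by
      rw [hξeq, add_sub_cancel_left, div_one]
    have hrξ : r < ξ := lt_of_le_of_lt hk hξmem.1
    have hξ1 : (1:ℝ) ≤ ξ := by linarith [hξmem.1]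
    have hξ0 : (0:ℝ) < ξ := by linarith
    have hξk1 : ξ ≤ (k:ℝ)+1 := hξmem.2.le
    have hkξ : (k:ℝ) ≤ ξ := hξmem.1.le
    have hξIoi : ξ ∈ Ioi r0 := hmem ξ ⟨hkξ, hξk1⟩
    have hstep := aux_stepA n hn r0 β C1 C2 hβ1 hC1 hC2 u hd1 hd2 hineq r ξ hr1
      (by simp only [mem_Ioi] at hrIoi; linarith) hrξ
    rw [← hc] at hstep
    -- rpow estimates
    have hkβ : (k:ℝ)^β ≤ ξ^β := Real.rpow_le_rpow hk0 hkξ (by linarith)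
    have hkβ1 : (k:ℝ)^β ≤ ((k:ℝ)+1)^β := Real.rpow_le_rpow hk0 (by linarith) (by linarith)
    have B1 : ξ^((3*β-3)/4) ≤ ((k:ℝ)+1)^β := by
      calc ξ^((3*β-3)/4) ≤ ξ^β := Real.rpow_le_rpow_of_exponent_le hξ1 (by linarith)
        _ ≤ ((k:ℝ)+1)^β := Real.rpow_le_rpow hξ0.le hξk1 (by linarith)
    have B2 : |u ξ| ≤ Cτ * Real.exp (-(4*c+1) * (k:ℝ)^β) := by
      refine le_trans (hCτ ξ hξIoi) (mul_le_mul_of_nonneg_left (Real.exp_le_exp.2 ?_) hCτ0)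
      nlinarith
    have B3 : |deriv u ξ| ≤ 2 * Cτ * Real.exp (-(4*c+1) * (k:ℝ)^β) := by
      rw [hξslope]
      have t1 := hCτ ((k:ℝ)+1) (hmem _ ⟨by linarith, le_refl _⟩)
      have t2 := hCτ (k:ℝ) (hmem _ ⟨le_refl _, by linarith⟩)
      have t3 : Real.exp (-(4*c+1) * ((k:ℝ)+1)^β) ≤ Real.exp (-(4*c+1) * (k:ℝ)^β) :=
        Real.exp_le_exp.2 (by nlinarith)
      have t4 := abs_sub (u ((k:ℝ)+1)) (u (k:ℝ))
      have t5 : Cτ * Real.exp (-(4*c+1) * ((k:ℝ)+1)^β) ≤ Cτ * Real.exp (-(4*c+1) * (k:ℝ)^β) :=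
        mul_le_mul_of_nonneg_left t3 hCτ0
      nlinarith
    have B4 : (c * ξ^((3*β-3)/4)) * (ξ - r) ≤ 4*c*(k:ℝ)^β := by
      have s0 : (0:ℝ) ≤ ξ^((3*β-3)/4) := Real.rpow_nonneg hξ0.le _
      have s1 : ξ^((3*β-3)/4) * (ξ - r) ≤ ξ^((3*β-3)/4) * ξ :=
        mul_le_mul_of_nonneg_left (by linarith) s0
      have s2 : ξ^((3*β-3)/4) * ξ = ξ^((3*β-3)/4 + 1) := (Real.rpow_add_one (ne_of_gt hξ0) _).symm
      have s3 : ξ^((3*β-3)/4 + 1) ≤ ξ^β := Real.rpow_le_rpow_of_exponent_le hξ1 (by linarith)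
      have s4 : ξ^β ≤ ((k:ℝ)+1)^β := Real.rpow_le_rpow hξ0.le hξk1 (by linarith)
      have s5 : ((k:ℝ)+1)^β ≤ (2*(k:ℝ))^β := Real.rpow_le_rpow (by linarith) (by linarith) (by linarith)
      have s6 : (2*(k:ℝ))^β = 2^β * (k:ℝ)^β := Real.mul_rpow (by norm_num) hk0
      have s7 : (2:ℝ)^β ≤ (2:ℝ)^(2:ℝ) := Real.rpow_le_rpow_of_exponent_le one_le_two hβ2
      have s8 : (2:ℝ)^(2:ℝ) = 4 := by
        rw [show (2:ℝ) = ((2:ℕ):ℝ) by norm_num, Real.rpow_natCast]; norm_num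
      have s9 : (0:ℝ) ≤ (k:ℝ)^β := Real.rpow_nonneg hk0 _
      have s10 : ξ^((3*β-3)/4) * (ξ - r) ≤ 4 * (k:ℝ)^β := by nlinarith
      have hc0 : 0 ≤ c := by linarith
      nlinarith
    -- combine
    have hP : Real.exp (-(4*c+1) * (k:ℝ)^β) * Real.exp (4*c*(k:ℝ)^β)
        = Real.exp (-((k:ℝ)^β)) := by
      rw [← Real.exp_add]; ring_nf
    have hexp4 : Real.exp ((c * ξ^((3*β-3)/4)) * (ξ - r)) ≤ Real.exp (4*c*(k:ℝ)^β) :=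
      Real.exp_le_exp.2 B4
    have hkb0 : (0:ℝ) ≤ ((k:ℝ)+1)^β := Real.rpow_nonneg (by linarith) _
    have main1 : |u r| ≤ (((k:ℝ)+1)^β * (Cτ * Real.exp (-(4*c+1) * (k:ℝ)^β))
        + 2 * Cτ * Real.exp (-(4*c+1) * (k:ℝ)^β)) * Real.exp (4*c*(k:ℝ)^β) := by
      refine le_trans hstep (mul_le_mul ?_ hexp4 (Real.exp_pos _).le ?_)
      · refine add_le_add (mul_le_mul B1 B2 (abs_nonneg _) hkb0) B3
      · positivity
    have main2 : |u r| ≤ (((k:ℝ)+1)^β + 2) * Cτ * Real.exp (-((k:ℝ)^β)) := by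
      rw [← hP]
      refine le_trans main1 (le_of_eq ?_)
      ring
    have hpow : ((k:ℝ)+1)^β ≤ ((k:ℝ)+1)^2 := by
      have p1 : ((k:ℝ)+1)^β ≤ ((k:ℝ)+1)^(2:ℝ) :=
        Real.rpow_le_rpow_of_exponent_le (by linarith) hβ2
      have p2 : ((k:ℝ)+1)^(2:ℝ) = ((k:ℝ)+1)^(2:ℕ) := by
        rw [show (2:ℝ) = ((2:ℕ):ℝ) by norm_num, Real.rpow_natCast]
      rw [p2] at p1; exact_mod_cast p1
    have hexpk : Real.exp (-((k:ℝ)^β)) ≤ Real.exp (-(k:ℝ)) := by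
      apply Real.exp_le_exp.2
      have h2 : (k:ℝ)^(1:ℝ) ≤ (k:ℝ)^β := Real.rpow_le_rpow_of_exponent_le hk1 hβ1
      rw [Real.rpow_one] at h2
      linarith
    refine le_trans main2 ?_
    have q1 : (((k:ℝ)+1)^β + 2) * Cτ ≤ (((k:ℝ)+1)^2 + 2) * Cτ :=
      mul_le_mul_of_nonneg_right (by linarith) hCτ0
    have q2 : (0:ℝ) ≤ (((k:ℝ)+1)^β + 2) * Cτ := by positivity
    exact mul_le_mul q1 hexpk (Real.exp_pos _).le (by positivity)
  -- pass to the limit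
  have hlim : Tendsto (fun k : ℕ => (((k:ℝ)+1)^2 + 2) * Cτ * Real.exp (-(k:ℝ))) atTop (𝓝 0) := by
    have h1 := Real.tendsto_pow_mul_exp_neg_atTop_nhds_zero 2
    have h2 := Real.tendsto_pow_mul_exp_neg_atTop_nhds_zero 1
    have h3 := Real.tendsto_exp_neg_atTop_nhds_zero
    have hsum : Tendsto (fun x : ℝ => ((x+1)^2 + 2) * Cτ * Real.exp (-x)) atTop (𝓝 0) := by
      have ht : Tendsto (fun x : ℝ => Cτ * (x^2*Real.exp (-x)) + (2*Cτ) * (x^1*Real.exp (-x))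
          + (3*Cτ) * Real.exp (-x)) atTop (𝓝 (Cτ*0 + (2*Cτ)*0 + (3*Cτ)*0)) :=
        ((h1.const_mul Cτ).add (h2.const_mul (2*Cτ))).add (h3.const_mul (3*Cτ))
      simp only [mul_zero, add_zero] at ht
      exact ht.congr (fun x => by ring)
    exact hsum.comp tendsto_natCast_atTop_atTop
  have hle : |u r| ≤ 0 := by
    refine ge_of_tendsto hlim (eventually_atTop.2 ⟨⌈r⌉₊, fun k hk => key k ?_⟩)
    exact_mod_cast Nat.ceil_le.1 hk
  have := abs_nonneg (u r)
  exact abs_eq_zero.1 (le_antisymm hle this)
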